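/- (Diaconis–Graham) For every two permutations σ and π of {1,…,n}, K(σ,π) ≤ S(σ,π) ≤ 2·K(σ,π). -/

import Mathlib

open Finset

/-- Spearman's footrule between two permutations `σ, π` of `{1,…,n}`:
`S(σ,π) = ∑ i, |σ i - π i|`. -/
def footrule {n : ℕ} (σ π : Equiv.Perm (Fin n)) : ℕ :=
  ∑ i : Fin n, (((σ i : ℕ) : ℤ) - ((π i : ℕ) : ℤ)).natAbs

/-- Kendall's tau between two permutations `σ, π` of `{1,…,n}`: the number of
discordant pairs `i < j`, i.e. those where exactly one of `σ i < σ j` and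
`π i < π j` holds. -/
def kendall {n : ℕ} (σ π : Equiv.Perm (Fin n)) : ℕ :=
  ((Finset.univ ×ˢ Finset.univ).filter fun p : Fin n × Fin n =>
    p.1 < p.2 ∧ ((σ p.1 < σ p.2 ∧ ¬ π p.1 < π p.2) ∨ (π p.1 < π p.2 ∧ ¬ σ p.1 < σ p.2))).card

namespace DG

variable {n : ℕ}

/-- The number of `k < l` with `τ l < τ k` (inversions with right end `l`). -/
def fib (τ : Equiv.Perm (Fin n)) (l : Fin n) : ℕ :=
  (univ.filter fun k => k < l ∧ τ l < τ k).card

/-- Footrule against the identity. -/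
def Dn (τ : Equiv.Perm (Fin n)) : ℕ :=
  ∑ i : Fin n, (((τ i : ℕ) : ℤ) - ((i : ℕ) : ℤ)).natAbs

lemma card_filter_lt (c : Fin n) :
    (univ.filter fun v : Fin n => v < c).card = (c : ℕ) := by
  rw [show (univ.filter fun v : Fin n => v < c) = Finset.Iio c by ext v; simp, Fin.card_Iio]

lemma card_filter_apply_lt (τ : Equiv.Perm (Fin n)) (c : Fin n) :
    (univ.filter fun j : Fin n => τ j < c).card = (c : ℕ) := by
  rw [← card_filter_lt c]
  apply Finset.card_nbij (i := fun j => τ j)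
  · intro a ha; simp only [mem_coe, mem_filter, mem_univ, true_and] at ha ⊢; exact ha
  · intro a _ b _ h; exact τ.injective h
  · intro v hv
    simp only [Set.mem_image, mem_coe, mem_filter, mem_univ, true_and] at hv ⊢
    exact ⟨τ.symm v, by simpa using hv, by simp⟩

lemma card_pairs_snd (Q : Fin n → Fin n → Prop) [DecidableRel Q] :
    ((univ ×ˢ univ).filter fun p : Fin n × Fin n => Q p.1 p.2).card
      = ∑ l : Fin n, (univ.filter fun k => Q k l).card := by
  rw [Finset.card_eq_sum_card_fiberwise (f := Prod.snd) (t := univ) (fun x _ => mem_univ _)]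
  refine Finset.sum_congr rfl fun l _ => ?_
  rw [Finset.filter_filter]
  refine Finset.card_nbij' (i := Prod.fst) (j := fun k => (k, l)) ?_ ?_ ?_ ?_
  · rintro ⟨a, b⟩ hp
    simp only [mem_coe, mem_filter, mem_product, mem_univ, true_and] at hp ⊢
    obtain ⟨hq, rfl⟩ := hp
    exact hq
  · intro k hk
    simp only [mem_coe, mem_filter, mem_product, mem_univ, true_and] at hk ⊢
    exact ⟨hk, trivial⟩
  · rintro ⟨a, b⟩ hp
    simp only [mem_coe, mem_filter, mem_product, mem_univ, true_and] at hp
    exact Prod.ext rfl hp.2.symm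
  · intro k _; rfl

lemma card_pairs_fst (Q : Fin n → Fin n → Prop) [DecidableRel Q] :
    ((univ ×ˢ univ).filter fun p : Fin n × Fin n => Q p.1 p.2).card
      = ∑ k : Fin n, (univ.filter fun l => Q k l).card := by
  rw [Finset.card_eq_sum_card_fiberwise (f := Prod.fst) (t := univ) (fun x _ => mem_univ _)]
  refine Finset.sum_congr rfl fun k _ => ?_
  rw [Finset.filter_filter]
  refine Finset.card_nbij' (i := Prod.snd) (j := fun l => (k, l)) ?_ ?_ ?_ ?_
  · rintro ⟨a, b⟩ hp
    simp only [mem_coe, mem_filter, mem_product, mem_univ, true_and] at hp ⊢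
    obtain ⟨hq, rfl⟩ := hp
    exact hq
  · intro l hl
    simp only [mem_coe, mem_filter, mem_product, mem_univ, true_and] at hl ⊢
    exact ⟨hl, trivial⟩
  · rintro ⟨a, b⟩ hp
    simp only [mem_coe, mem_filter, mem_product, mem_univ, true_and] at hp
    exact Prod.ext hp.2.symm rfl
  · intro l _; rfl

lemma kendall_one (τ : Equiv.Perm (Fin n)) :
    kendall τ 1 = ∑ l : Fin n, fib τ l := by
  unfold kendall fib
  rw [← card_pairs_snd (Q := fun k l => k < l ∧ τ l < τ k)]
  congr 1
  refine Finset.filter_congr fun p _ => ?_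
  simp only [Equiv.Perm.one_apply]
  constructor
  · rintro ⟨hab, h⟩
    refine ⟨hab, ?_⟩
    rcases h with ⟨_, h2⟩ | ⟨_, h2⟩
    · exact absurd hab h2
    · exact lt_of_le_of_ne (not_lt.1 h2) fun e => (ne_of_lt hab).symm (τ.injective e)
  · rintro ⟨hab, h⟩
    exact ⟨hab, Or.inr ⟨hab, not_lt.2 h.le⟩⟩

lemma footrule_one (τ : Equiv.Perm (Fin n)) : footrule τ 1 = Dn τ := rfl

lemma sub_le_right (τ : Equiv.Perm (Fin n)) (i : Fin n) :
    (τ i : ℕ) - (i : ℕ) ≤ (univ.filter fun j => i < j ∧ τ j < τ i).card := by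
  have h0 := card_filter_apply_lt τ (τ i)
  have hsplit := Finset.card_filter_add_card_filter_not
    (s := univ.filter fun j : Fin n => τ j < τ i) (p := fun j => j < i)
  rw [Finset.filter_filter, Finset.filter_filter, h0] at hsplit
  have h1 : (univ.filter fun j : Fin n => τ j < τ i ∧ j < i).card
      ≤ (univ.filter fun v : Fin n => v < i).card :=
    Finset.card_le_card fun x hx => by
      simp only [mem_filter] at hx ⊢; exact ⟨mem_univ x, hx.2.2⟩
  have h2 : (univ.filter fun j : Fin n => τ j < τ i ∧ ¬ j < i)
      = (univ.filter fun j : Fin n => i < j ∧ τ j < τ i) := by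
    refine Finset.filter_congr fun j _ => ?_
    constructor
    · rintro ⟨h1', h2'⟩
      exact ⟨lt_of_le_of_ne (not_lt.1 h2') (fun e => (ne_of_lt h1') (by rw [e])), h1'⟩
    · rintro ⟨h1', h2'⟩
      exact ⟨h2', not_lt.2 h1'.le⟩
  rw [h2] at hsplit; rw [card_filter_lt] at h1
  omega


lemma sub_le_left (τ : Equiv.Perm (Fin n)) (i : Fin n) :
    (i : ℕ) - (τ i : ℕ) ≤ (univ.filter fun k => k < i ∧ τ i < τ k).card := by
  have h0 := card_filter_lt i
  have hsplit := Finset.card_filter_add_card_filter_not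
    (s := univ.filter fun k : Fin n => k < i) (p := fun k => τ k < τ i)
  rw [Finset.filter_filter, Finset.filter_filter, h0] at hsplit
  have h1 : (univ.filter fun k : Fin n => k < i ∧ τ k < τ i).card
      ≤ (univ.filter fun j : Fin n => τ j < τ i).card :=
    Finset.card_le_card fun x hx => by
      simp only [mem_filter] at hx ⊢; exact ⟨mem_univ x, hx.2.2⟩
  have h2 : (univ.filter fun k : Fin n => k < i ∧ ¬ τ k < τ i)
      = (univ.filter fun k : Fin n => k < i ∧ τ i < τ k) := by
    refine Finset.filter_congr fun k _ => ?_
    constructor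
    · rintro ⟨h1', h2'⟩
      refine ⟨h1', lt_of_le_of_ne (not_lt.1 h2') fun e => (ne_of_lt h1') (τ.injective e).symm⟩
    · rintro ⟨h1', h2'⟩
      exact ⟨h1', not_lt.2 h2'.le⟩
  rw [h2] at hsplit; rw [card_filter_apply_lt] at h1
  omega

lemma Dn_le (τ : Equiv.Perm (Fin n)) : Dn τ ≤ 2 * ∑ l : Fin n, fib τ l := by
  have habs : ∀ i : Fin n, (((τ i : ℕ) : ℤ) - ((i : ℕ) : ℤ)).natAbs
      = ((τ i : ℕ) - (i : ℕ)) + ((i : ℕ) - (τ i : ℕ)) := fun i => by omega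
  calc Dn τ = ∑ i : Fin n, (((τ i : ℕ) - (i : ℕ)) + ((i : ℕ) - (τ i : ℕ))) :=
        Finset.sum_congr rfl fun i _ => habs i
    _ = (∑ i : Fin n, ((τ i : ℕ) - (i : ℕ))) + ∑ i : Fin n, ((i : ℕ) - (τ i : ℕ)) :=
        Finset.sum_add_distrib
    _ ≤ (∑ i : Fin n, (univ.filter fun j => i < j ∧ τ j < τ i).card)
        + ∑ i : Fin n, (univ.filter fun k => k < i ∧ τ i < τ k).card :=
        add_le_add (Finset.sum_le_sum fun i _ => sub_le_right τ i)
          (Finset.sum_le_sum fun i _ => sub_le_left τ i)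
    _ = (∑ l : Fin n, fib τ l) + ∑ l : Fin n, fib τ l := by
        congr 1
        rw [← card_pairs_fst (Q := fun k l => k < l ∧ τ l < τ k),
          card_pairs_snd (Q := fun k l => k < l ∧ τ l < τ k)]
        rfl
    _ = 2 * ∑ l : Fin n, fib τ l := (two_mul _).symm

lemma fib_le_Dn (τ : Equiv.Perm (Fin n)) : ∑ l : Fin n, fib τ l ≤ Dn τ := by
  generalize hN : (univ.filter fun k => τ k ≠ k).card = N
  induction N using Nat.strong_induction_on generalizing τ with
  | _ N IH =>
  by_cases hid : ∀ k, τ k = k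
  · have : ∀ l : Fin n, fib τ l = 0 := by
      intro l
      rw [fib, Finset.card_eq_zero, Finset.filter_eq_empty_iff]
      rintro k - ⟨hk, hk2⟩
      rw [hid k, hid l] at hk2
      exact absurd hk2 (asymm hk)
    simp only [this, Finset.sum_const_zero]
    exact Nat.zero_le _
  · push_neg at hid
    set s : Finset (Fin n) := univ.filter fun k => τ k ≠ k with hs
    have hsne : s.Nonempty := by
      obtain ⟨k, hk⟩ := hid
      exact ⟨k, by simp [hs, hk]⟩
    set j : Fin n := s.max' hsne with hjdef
    have hj : τ j ≠ j := (mem_filter.1 (s.max'_mem hsne)).2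
    have hmax : ∀ k, τ k ≠ k → k ≤ j := fun k hk => s.le_max' k (by simp [hs, hk])
    have hfix : ∀ k, j < k → τ k = k := by
      intro k hk
      by_contra h
      exact absurd (hmax k h) (not_le.2 hk)
    have hvalle : ∀ k, k ≤ j → τ k ≤ j := by
      intro k hk
      by_contra h
      have h1 : τ (τ k) = τ k := hfix _ (not_le.1 h)
      have : τ k = k := τ.injective h1
      exact absurd (this ▸ not_le.1 h) (not_lt.2 hk)
    set b : Fin n := τ j with hbdef
    set i : Fin n := τ.symm j with hidef
    have hτi : τ i = j := τ.apply_symm_apply j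
    have hb : b < j := lt_of_le_of_ne (hvalle j le_rfl) hj
    have hij : i < j := by
      rcases lt_trichotomy i j with h | h | h
      · exact h
      · exact absurd (hbdef.trans ((congrArg τ h).symm.trans hτi)) hj
      · exact absurd ((hfix i h).symm.trans hτi) (ne_of_gt h)
    set τ' : Equiv.Perm (Fin n) := τ * Equiv.swap i j with hτ'def
    have hτ'i : τ' i = b := by
      simp [hτ'def, Equiv.Perm.mul_apply, Equiv.swap_apply_left, hbdef]
    have hτ'j : τ' j = j := by
      simp [hτ'def, Equiv.Perm.mul_apply, Equiv.swap_apply_right, hτi]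
    have hτ'k : ∀ k, k ≠ i → k ≠ j → τ' k = τ k := by
      intro k h1 h2
      simp [hτ'def, Equiv.Perm.mul_apply, Equiv.swap_apply_of_ne_of_ne h1 h2]
    set m : ℕ := (univ.filter fun k => i < k ∧ k < j ∧ b < τ k).card with hmdef
    -- support decreases
    have hcard : (univ.filter fun k => τ' k ≠ k).card < N := by
      have hsub : (univ.filter fun k => τ' k ≠ k) ⊆ s.erase j := by
        intro k hk
        simp only [mem_filter, mem_univ, true_and] at hk
        have hkj : k ≠ j := fun e => hk (by rw [e, hτ'j])
        refine mem_erase.2 ⟨hkj, ?_⟩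
        by_cases hki : k = i
        · simp [hs, hki, hτi, hij.ne']
        · simp only [hs, mem_filter, mem_univ, true_and]
          rw [← hτ'k k hki hkj]; exact hk
      have hjs : j ∈ s := s.max'_mem hsne
      calc (univ.filter fun k => τ' k ≠ k).card ≤ (s.erase j).card := Finset.card_le_card hsub
        _ = s.card - 1 := Finset.card_erase_of_mem hjs
        _ < N := by
          have : 0 < s.card := Finset.card_pos.2 ⟨j, hjs⟩
          omega
    have IH' : ∑ l : Fin n, fib τ' l ≤ Dn τ' := IH _ hcard τ' rfl
    -- m bounds
    have hm1 : m ≤ (j : ℕ) - (i : ℕ) - 1 := by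
      rw [← Fin.card_Ioo]
      apply Finset.card_le_card
      intro k hk
      simp only [mem_filter, mem_univ, true_and] at hk
      exact Finset.mem_Ioo.2 ⟨hk.1, hk.2.1⟩
    have hvlt : ∀ k, k < j → k ≠ i → τ k < j := by
      intro k hk hki
      exact lt_of_le_of_ne (hvalle k hk.le) fun e => hki (τ.injective (e.trans hτi.symm))
    have hm2 : m ≤ (j : ℕ) - (b : ℕ) - 1 := by
      rw [← Fin.card_Ioo]
      apply Finset.card_le_card_of_injOn τ
      · intro k hk
        simp only [mem_coe, mem_filter, mem_univ, true_and] at hk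
        exact Finset.mem_Ioo.2 ⟨hk.2.2, hvlt k hk.2.1 (ne_of_gt hk.1)⟩
      · intro a _ c _ h; exact τ.injective h
    -- decomposition of sums over univ
    have hji : j ∈ (univ : Finset (Fin n)).erase i := mem_erase.2 ⟨hij.ne', mem_univ _⟩
    have decomp : ∀ f : Fin n → ℕ, ∑ k : Fin n, f k
        = f i + (f j + ∑ k ∈ ((univ : Finset (Fin n)).erase i).erase j, f k) := by
      intro f
      rw [Finset.add_sum_erase _ f hji, Finset.add_sum_erase _ f (mem_univ i)]
    -- D side
    have hij' : (i : ℕ) < (j : ℕ) := hij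
    have hb' : (b : ℕ) < (j : ℕ) := hb
    have hD : Dn τ' + (2 * m + 1) ≤ Dn τ := by
      have hEeq : ∑ k ∈ ((univ : Finset (Fin n)).erase i).erase j,
            (((τ' k : ℕ) : ℤ) - ((k : ℕ) : ℤ)).natAbs
          = ∑ k ∈ ((univ : Finset (Fin n)).erase i).erase j,
            (((τ k : ℕ) : ℤ) - ((k : ℕ) : ℤ)).natAbs := by
        refine Finset.sum_congr rfl fun k hk => ?_
        have h1 := Finset.mem_erase.1 hk
        have h2 := Finset.mem_erase.1 h1.2
        rw [hτ'k k h2.1 h1.1]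
      have dτ : Dn τ = _ := decomp (fun k => (((τ k : ℕ) : ℤ) - ((k : ℕ) : ℤ)).natAbs)
      have dτ' : Dn τ' = _ := decomp (fun k => (((τ' k : ℕ) : ℤ) - ((k : ℕ) : ℤ)).natAbs)
      simp only [hτi, ← hbdef] at dτ
      simp only [hτ'i, hτ'j] at dτ'
      rw [hEeq] at dτ'
      omega
    -- I side
    have hI : ∑ l : Fin n, fib τ l ≤ (∑ l : Fin n, fib τ' l) + (2 * m + 1) := by
      have hfi : fib τ i = 0 := by
        rw [fib, Finset.card_eq_zero, Finset.filter_eq_empty_iff]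
        rintro k - ⟨hk, hk2⟩
        rw [hτi] at hk2
        exact absurd (hvalle k (hk.trans hij).le) (not_le.2 hk2)
      have hfj' : fib τ' j = 0 := by
        rw [fib, Finset.card_eq_zero, Finset.filter_eq_empty_iff]
        rintro k - ⟨hk, hk2⟩
        rw [hτ'j] at hk2
        by_cases hki : k = i
        · rw [hki, hτ'i] at hk2; exact absurd hk2 (asymm hb)
        · rw [hτ'k k hki hk.ne] at hk2
          exact absurd (hvalle k hk.le) (not_le.2 hk2)
      have hS1 : fib τ' i = (univ.filter fun k => k < i ∧ b < τ k).card := by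
        refine congrArg Finset.card (Finset.filter_congr fun k _ => ?_)
        by_cases hk : k < i
        · rw [hτ'i, hτ'k k (ne_of_lt hk) (ne_of_lt (hk.trans hij))]
        · simp [hk]
      have hfj : fib τ j ≤ fib τ' i + m + 1 := by
        have hsub : (univ.filter fun k => k < j ∧ τ j < τ k)
            ⊆ insert i ((univ.filter fun k => k < i ∧ b < τ k)
              ∪ (univ.filter fun k => i < k ∧ k < j ∧ b < τ k)) := by
          intro k hk
          simp only [mem_filter, mem_univ, true_and] at hk
          obtain ⟨hkj, hbk⟩ := hk
          rw [← hbdef] at hbk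
          by_cases hki : k = i
          · exact mem_insert.2 (Or.inl hki)
          · refine mem_insert_of_mem (Finset.mem_union.2 ?_)
            rcases lt_or_gt_of_ne (show k ≠ i from hki) with h | h
            · exact Or.inl (mem_filter.2 ⟨mem_univ _, h, hbk⟩)
            · exact Or.inr (mem_filter.2 ⟨mem_univ _, h, hkj, hbk⟩)
        calc fib τ j ≤ _ := Finset.card_le_card hsub
          _ ≤ ((univ.filter fun k => k < i ∧ b < τ k)
              ∪ (univ.filter fun k => i < k ∧ k < j ∧ b < τ k)).card + 1 :=
            Finset.card_insert_le _ _
          _ ≤ ((univ.filter fun k : Fin n => k < i ∧ b < τ k).card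
              + (univ.filter fun k : Fin n => i < k ∧ k < j ∧ b < τ k).card) + 1 :=
            Nat.add_le_add_right (Finset.card_union_le _ _) 1
          _ = fib τ' i + m + 1 := by rw [hS1, hmdef]
      have hE : ∀ l ∈ ((univ : Finset (Fin n)).erase i).erase j,
          fib τ l ≤ fib τ' l + (if i < l ∧ l < j ∧ b < τ l then 1 else 0) := by
        intro l hlE
        have h1 := Finset.mem_erase.1 hlE
        have h2 := Finset.mem_erase.1 h1.2
        have hlj : l ≠ j := h1.1
        have hli : l ≠ i := h2.1
        rcases lt_trichotomy l i with hl | hl | hl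
        · have he : fib τ l = fib τ' l := by
            refine congrArg Finset.card (Finset.filter_congr fun k _ => ?_)
            by_cases hk : k < l
            · rw [hτ'k l hli hlj,
                hτ'k k (ne_of_lt (hk.trans hl)) (ne_of_lt ((hk.trans hl).trans hij))]
            · simp [hk]
          rw [he]; exact Nat.le_add_right _ _
        · exact absurd hl hli
        · rcases lt_trichotomy l j with hlj2 | h | h
          · -- middle case i < l < j
            have hτ'l : τ' l = τ l := hτ'k l hli hlj
            by_cases hbl : b < τ l
            · have hsub : (univ.filter fun k => k < l ∧ τ l < τ k)
                  ⊆ insert i (univ.filter fun k => k < l ∧ τ' l < τ' k) := by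
                intro k hk
                simp only [mem_filter, mem_univ, true_and] at hk
                by_cases hki : k = i
                · exact mem_insert.2 (Or.inl hki)
                · refine mem_insert_of_mem (mem_filter.2 ⟨mem_univ _, hk.1, ?_⟩)
                  rw [hτ'l, hτ'k k hki (ne_of_lt (hk.1.trans hlj2))]
                  exact hk.2
              have hle : fib τ l ≤ fib τ' l + 1 :=
                le_trans (Finset.card_le_card hsub) (Finset.card_insert_le _ _)
              have : (if i < l ∧ l < j ∧ b < τ l then 1 else 0) = 1 :=
                if_pos ⟨hl, hlj2, hbl⟩
              omega
            · have hτlb : τ l < b :=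
                lt_of_le_of_ne (not_lt.1 hbl)
                  fun e => hlj (τ.injective (e.trans hbdef))
              have hsub : (univ.filter fun k => k < l ∧ τ l < τ k)
                  ⊆ (univ.filter fun k => k < l ∧ τ' l < τ' k) := by
                intro k hk
                simp only [mem_filter, mem_univ, true_and] at hk ⊢
                refine ⟨hk.1, ?_⟩
                by_cases hki : k = i
                · rw [hτ'l, hki, hτ'i]; exact hτlb
                · rw [hτ'l, hτ'k k hki (ne_of_lt (hk.1.trans hlj2))]; exact hk.2
              exact le_trans (Finset.card_le_card hsub) (Nat.le_add_right _ _)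
          · exact absurd h hlj
          · -- case j < l
            have hτl : τ l = l := hfix l h
            have hτ'l : τ' l = l := by rw [hτ'k l hli hlj]; exact hτl
            have he : fib τ l = fib τ' l := by
              refine congrArg Finset.card (Finset.filter_congr fun k _ => ?_)
              rw [hτl, hτ'l]
              by_cases hki : k = i
              · rw [hki, hτi, hτ'i]
                simp [not_lt.2 h.le, not_lt.2 (hb.trans h).le]
              · by_cases hkj : k = j
                · rw [hkj, ← hbdef, hτ'j]
                  simp [not_lt.2 h.le, not_lt.2 (hb.trans h).le]
                · rw [hτ'k k hki hkj]
            rw [he]; exact Nat.le_add_right _ _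
      have hind : ∑ l ∈ ((univ : Finset (Fin n)).erase i).erase j,
          (if i < l ∧ l < j ∧ b < τ l then 1 else 0) ≤ m := by
        rw [← Finset.card_filter]
        exact Finset.card_le_card fun x hx => by
          simp only [mem_filter] at hx ⊢
          exact ⟨mem_univ x, hx.2⟩
      have dI : (∑ l : Fin n, fib τ l) = _ := decomp (fib τ)
      have dI' : (∑ l : Fin n, fib τ' l) = _ := decomp (fib τ')
      have hEsum : ∑ l ∈ ((univ : Finset (Fin n)).erase i).erase j, fib τ l
          ≤ (∑ l ∈ ((univ : Finset (Fin n)).erase i).erase j, fib τ' l)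
            + ∑ l ∈ ((univ : Finset (Fin n)).erase i).erase j,
              (if i < l ∧ l < j ∧ b < τ l then 1 else 0) := by
        rw [← Finset.sum_add_distrib]
        exact Finset.sum_le_sum hE
      omega
    calc ∑ l : Fin n, fib τ l ≤ (∑ l : Fin n, fib τ' l) + (2 * m + 1) := hI
      _ ≤ Dn τ' + (2 * m + 1) := by omega
      _ ≤ Dn τ := hD


lemma footrule_red (σ π : Equiv.Perm (Fin n)) : footrule σ π = footrule (σ * π⁻¹) 1 := by
  unfold footrule
  rw [← Equiv.sum_comp π (fun k => ((((σ * π⁻¹) k : ℕ) : ℤ)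
    - (((1 : Equiv.Perm (Fin n)) k : ℕ) : ℤ)).natAbs)]
  refine Finset.sum_congr rfl fun i _ => ?_
  simp [Equiv.Perm.mul_apply, Equiv.symm_apply_apply]

lemma kendall_red (σ π : Equiv.Perm (Fin n)) : kendall σ π = kendall (σ * π⁻¹) 1 := by
  have hτ : ∀ x : Fin n, (σ * π⁻¹) (π x) = σ x := fun x => by
    simp [Equiv.Perm.mul_apply]
  unfold kendall
  refine Finset.card_bij'
    (fun p _ => if π p.1 < π p.2 then (π p.1, π p.2) else (π p.2, π p.1))
    (fun q _ => if π⁻¹ q.1 < π⁻¹ q.2 then (π⁻¹ q.1, π⁻¹ q.2) else (π⁻¹ q.2, π⁻¹ q.1))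
    ?_ ?_ ?_ ?_
  · rintro ⟨p1, p2⟩ hp
    dsimp only
    simp only [mem_filter, mem_product, mem_univ, true_and] at hp
    obtain ⟨hlt, hd⟩ := hp
    by_cases h : π p1 < π p2
    · rw [if_pos h]
      rw [mem_filter]
      simp only [mem_filter, mem_product, mem_univ, true_and, Equiv.Perm.one_apply, hτ]
      refine ⟨h, Or.inr ⟨h, ?_⟩⟩
      rcases hd with ⟨h1, h2⟩ | ⟨h1, h2⟩
      · exact absurd h h2
      · exact h2
    · rw [if_neg h]
      have h' : π p2 < π p1 :=
        lt_of_le_of_ne (not_lt.1 h) fun e => (ne_of_lt hlt) ((π.injective e).symm)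
      rw [mem_filter]
      simp only [mem_filter, mem_product, mem_univ, true_and, Equiv.Perm.one_apply, hτ]
      refine ⟨h', Or.inr ⟨h', ?_⟩⟩
      rcases hd with ⟨h1, h2⟩ | ⟨h1, h2⟩
      · exact asymm h1
      · exact absurd h1 h
  · rintro ⟨q1, q2⟩ hq
    rw [mem_filter] at hq
    simp only [mem_filter, mem_product, mem_univ, true_and, Equiv.Perm.one_apply,
      Equiv.Perm.mul_apply] at hq
    dsimp only
    obtain ⟨hlt, hd⟩ := hq
    have hs : ¬ σ (π⁻¹ q1) < σ (π⁻¹ q2) := by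
      rcases hd with ⟨h1, h2⟩ | ⟨h1, h2⟩
      · exact absurd hlt h2
      · exact h2
    by_cases h : π⁻¹ q1 < π⁻¹ q2
    · rw [if_pos h]
      simp only [mem_filter, mem_product, mem_univ, true_and, Equiv.Perm.coe_inv, Equiv.apply_symm_apply]
      exact ⟨h, Or.inr ⟨hlt, hs⟩⟩
    · rw [if_neg h]
      have h' : π⁻¹ q2 < π⁻¹ q1 :=
        lt_of_le_of_ne (not_lt.1 h) fun e => (ne_of_lt hlt) ((π⁻¹.injective e).symm)
      simp only [mem_filter, mem_product, mem_univ, true_and, Equiv.Perm.coe_inv, Equiv.apply_symm_apply]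
      refine ⟨h', Or.inl ⟨?_, asymm hlt⟩⟩
      refine lt_of_le_of_ne (not_lt.1 hs) fun e => (ne_of_lt hlt) ?_
      have := σ.injective e
      have := π⁻¹.injective this
      exact this.symm
  · rintro ⟨p1, p2⟩ hp
    simp only [mem_filter, mem_product, mem_univ, true_and] at hp
    have hlt := hp.1
    by_cases h : π p1 < π p2 <;>
      simp [h, Equiv.symm_apply_apply, hlt, (asymm hlt : ¬ p2 < p1)]
  · rintro ⟨q1, q2⟩ hq
    simp only [mem_filter, mem_product, mem_univ, true_and] at hq
    have hlt := hq.1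
    by_cases h : π⁻¹ q1 < π⁻¹ q2
    · rw [if_pos h]; simp [h, hlt]
    · rw [if_neg h]; simp [(asymm hlt : ¬ q2 < q1)]

end DG

/-- (Diaconis–Graham) For every two permutations `σ` and `π` of `{1,…,n}`,
`K(σ,π) ≤ S(σ,π) ≤ 2 K(σ,π)`. -/
theorem diaconis_graham (n : ℕ) (σ π : Equiv.Perm (Fin n)) :
    kendall σ π ≤ footrule σ π ∧ footrule σ π ≤ 2 * kendall σ π := by
  rw [DG.kendall_red σ π, DG.footrule_red σ π, DG.kendall_one, DG.footrule_one]
  exact ⟨DG.fib_le_Dn _, DG.Dn_le _⟩
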